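/- Let a, b be real numbers with b < 0. There exists a constant C > 0 depending only on a and b such that for all real κ > 0 and A > 0 satisfying κ·A^b ≥ 1, one has ∫_0^A τ^(a-1) · exp(−κ·τ^b) dτ ≤ C · A^a · exp(−κ·A^b). -/

import Mathlib

open MeasureTheory Real

/-- `exp (-y) ≤ n! * y ^ (-(n:ℝ))` for `y > 0`. -/
lemma exp_neg_le_factorial_mul_rpow (y : ℝ) (hy : 0 < y) (n : ℕ) :
    Real.exp (-y) ≤ (n.factorial : ℝ) * y ^ (-(n : ℝ)) := by
  have h1 : y ^ (n : ℕ) / (n.factorial : ℝ) ≤ Real.exp y :=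
    Real.pow_div_factorial_le_exp y hy.le n
  have hfac : (0 : ℝ) < n.factorial := by exact_mod_cast n.factorial_pos
  have hyn : (0 : ℝ) < y ^ (n : ℕ) := pow_pos hy n
  rw [Real.exp_neg, Real.rpow_neg hy.le, Real.rpow_natCast]
  rw [inv_le_iff_one_le_mul₀ (Real.exp_pos y)]
  calc (1 : ℝ) = (n.factorial : ℝ) * (y ^ (n:ℕ))⁻¹ * (y ^ (n:ℕ) / n.factorial) := by
        field_simp
    _ ≤ (n.factorial : ℝ) * (y ^ (n:ℕ))⁻¹ * Real.exp y := by
        apply mul_le_mul_of_nonneg_left h1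
        positivity

/-- Second case of display (2.6): for `b < 0` there is `C = C(a,b) > 0` such that
`∫_0^A τ^(a-1) exp(-κ τ^b) dτ ≤ C A^a exp(-κ A^b)` whenever `κ A^b ≥ 1`. -/
theorem integral_Ioc_rpow_exp_neg_exponent (a b : ℝ) (hb : b < 0) :
    ∃ C : ℝ, 0 < C ∧ ∀ κ A : ℝ, 0 < κ → 0 < A → 1 ≤ κ * A ^ b →
      ∫ τ in Set.Ioc (0 : ℝ) A, τ ^ (a - 1) * Real.exp (-κ * τ ^ b) ≤
        C * A ^ a * Real.exp (-κ * A ^ b) := by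
  have hnb : 0 < -b := neg_pos.mpr hb
  obtain ⟨n, hn⟩ := exists_nat_gt ((-a) / (-b))
  have hc : 0 < a - b * n := by
    have := (div_lt_iff₀ hnb).mp hn
    nlinarith
  set c : ℝ := a - b * n with hcdef
  refine ⟨Real.exp 1 * n.factorial / c, by positivity, fun κ A hκ hA hκA => ?_⟩
  set r : ℝ := a - 1 - b * n with hrdef
  have hr1 : -1 < r := by simp only [hrdef]; linarith
  set K : ℝ := Real.exp 1 * n.factorial * Real.exp (-κ * A ^ b) * A ^ (b * n) with hKdef
  have hK : 0 < K := by positivity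
  -- pointwise bound on (0, A]
  have hpt : ∀ τ ∈ Set.Ioc (0 : ℝ) A,
      τ ^ (a - 1) * Real.exp (-κ * τ ^ b) ≤ K * τ ^ r := by
    intro τ ⟨hτ0, hτA⟩
    have hAb : 0 < A ^ b := Real.rpow_pos_of_pos hA b
    have hτb : 0 < τ ^ b := Real.rpow_pos_of_pos hτ0 b
    -- x := (τ/A)^b ≥ 1
    set x : ℝ := (τ / A) ^ b with hxdef
    have hx0 : 0 < x := Real.rpow_pos_of_pos (div_pos hτ0 hA) b
    have hx1 : 1 ≤ x :=
      Real.one_le_rpow_of_pos_of_le_one_of_nonpos (div_pos hτ0 hA)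
        ((div_le_one hA).mpr hτA) hb.le
    have hxval : τ ^ b = A ^ b * x := by
      rw [hxdef, Real.div_rpow hτ0.le hA.le]
      field_simp
    -- κ τ^b ≥ κ A^b + x - 1
    have hkey : κ * A ^ b + x - 1 ≤ κ * τ ^ b := by
      rw [hxval]
      nlinarith
    have hexp : Real.exp (-κ * τ ^ b) ≤
        Real.exp 1 * Real.exp (-κ * A ^ b) * Real.exp (-x) := by
      rw [← Real.exp_add, ← Real.exp_add]
      apply Real.exp_le_exp.mpr
      linarith
    have hexp2 : Real.exp (-x) ≤ (n.factorial : ℝ) * x ^ (-(n : ℝ)) :=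
      exp_neg_le_factorial_mul_rpow x hx0 n
    have hxpow : x ^ (-(n : ℝ)) = A ^ (b * n) * τ ^ (-(b * n)) := by
      have hdiv : (0:ℝ) ≤ τ / A := (div_pos hτ0 hA).le
      rw [hxdef, ← Real.rpow_mul hdiv]
      have : b * -(n : ℝ) = -(b * n) := by ring
      rw [this, Real.div_rpow hτ0.le hA.le, Real.rpow_neg hA.le, div_inv_eq_mul]
      ring
    have hτsplit : τ ^ (a - 1) * τ ^ (-(b * n)) = τ ^ r := by
      rw [← Real.rpow_add hτ0, hrdef]; ring_nf
    calc τ ^ (a - 1) * Real.exp (-κ * τ ^ b)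
        ≤ τ ^ (a - 1) * (Real.exp 1 * Real.exp (-κ * A ^ b) *
            ((n.factorial : ℝ) * x ^ (-(n : ℝ)))) := by
          apply mul_le_mul_of_nonneg_left _ (Real.rpow_nonneg hτ0.le _)
          calc Real.exp (-κ * τ ^ b) ≤ Real.exp 1 * Real.exp (-κ * A ^ b) * Real.exp (-x) := hexp
            _ ≤ _ := by
                apply mul_le_mul_of_nonneg_left hexp2
                positivity
      _ = K * τ ^ r := by
          rw [hxpow, ← hτsplit, hKdef]; ring
  -- integral bound
  have hint : IntegrableOn (fun τ => K * τ ^ r) (Set.Ioc (0:ℝ) A) := by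
    apply Integrable.const_mul
    exact (intervalIntegrable_iff_integrableOn_Ioc_of_le hA.le).mp
      (intervalIntegral.intervalIntegrable_rpow' hr1)
  have hmono : ∫ τ in Set.Ioc (0 : ℝ) A, τ ^ (a - 1) * Real.exp (-κ * τ ^ b) ≤
      ∫ τ in Set.Ioc (0 : ℝ) A, K * τ ^ r := by
    apply integral_mono_of_nonneg
    · filter_upwards [ae_restrict_mem measurableSet_Ioc] with τ hτ
      have := hτ.1; positivity
    · exact hint
    · filter_upwards [ae_restrict_mem measurableSet_Ioc] with τ hτ
      exact hpt τ hτ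
  have hval : ∫ τ in Set.Ioc (0 : ℝ) A, K * τ ^ r = K * (A ^ (r + 1) / (r + 1)) := by
    rw [integral_const_mul, ← intervalIntegral.integral_of_le hA.le,
      integral_rpow (Or.inl hr1)]
    rw [Real.zero_rpow (by linarith : r + 1 ≠ 0)]
    ring_nf
  have hAa : K * (A ^ (r + 1) / (r + 1)) =
      Real.exp 1 * n.factorial / c * A ^ a * Real.exp (-κ * A ^ b) := by
    have hrc : r + 1 = c := by simp only [hrdef, hcdef]; ring
    have hApow : A ^ (b * (n:ℝ)) * A ^ c = A ^ a := by
      rw [← Real.rpow_add hA]; congr 1; rw [hcdef]; ring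
    calc K * (A ^ (r + 1) / (r + 1))
        = Real.exp 1 * n.factorial * Real.exp (-κ * A ^ b) *
            (A ^ (b * (n:ℝ)) * A ^ c) / c := by rw [hKdef, hrc]; ring
      _ = _ := by rw [hApow]; ring
  linarith [hmono, hval.le, hval.ge, hAa.le, hAa.ge]
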